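/- A 2-Visits instance D with deadlines d_1 ≤ ... ≤ d_n has a feasible schedule if and only if the Var-k-Visits instance G with deadlines g_{i1} = g_{i2} = d_i and g_{ij} = 3n for j ≥ 3 has a feasible schedule, for any fixed k ≥ 2. -/

import Mathlib

/-- A feasible schedule for the Var-k-Visits problem with `n` tasks and deadlines
`g i j` (the deadline for the `j`-th occurrence of task `i`, `j` counted from 1):
`f` gives the task visited at each position in `[1, n*k]`, each task `i < n` is visited
exactly `k` times, the first occurrence of `i` is at position at most `g i 1`, and the
`j`-th occurrence of `i` is at most `g i j` positions after the `(j-1)`-th occurrence. -/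
def VarKVFeasible (n k : ℕ) (g : ℕ → ℕ → ℕ) (f : ℕ → ℕ) : Prop :=
  (∀ p, 1 ≤ p → p ≤ n * k → f p < n) ∧
  (∀ i < n, ((Finset.Icc 1 (n * k)).filter fun p => f p = i).card = k) ∧
  (∀ i < n, ∀ p, 1 ≤ p → p ≤ n * k → f p = i →
    ((((Finset.Icc 1 p).filter fun q => f q = i).card = 1 → p ≤ g i 1) ∧
     (∀ q, 1 ≤ q → q < p → f q = i → (∀ r, q < r → r < p → f r ≠ i) →
        p ≤ q + g i (((Finset.Icc 1 p).filter fun q' => f q' = i).card))))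


open Finset in
private def occCnt (f : ℕ → ℕ) (i p : ℕ) : ℕ := ((Finset.Icc 1 p).filter fun q => f q = i).card

private lemma occCnt_mono (f : ℕ → ℕ) (i : ℕ) {p q : ℕ} (h : p ≤ q) : occCnt f i p ≤ occCnt f i q :=
  Finset.card_le_card (Finset.filter_subset_filter _ (Finset.Icc_subset_Icc_right h))

private lemma occCnt_pos (f : ℕ → ℕ) (i p : ℕ) (hp : 1 ≤ p) (hfp : f p = i) : 1 ≤ occCnt f i p :=
  Finset.card_pos.mpr ⟨p, Finset.mem_filter.mpr ⟨Finset.mem_Icc.mpr ⟨hp, le_rfl⟩, hfp⟩⟩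

private lemma occCnt_succ_le (f : ℕ → ℕ) (i : ℕ) {q p : ℕ} (hq : 1 ≤ q) (hqp : q < p)
    (hfq : f q = i) (hfp : f p = i) : occCnt f i q + 1 ≤ occCnt f i p := by
  have hsub : insert p ((Finset.Icc 1 q).filter fun r => f r = i)
      ⊆ (Finset.Icc 1 p).filter fun r => f r = i := by
    intro r hr
    rcases Finset.mem_insert.mp hr with h | h
    · subst h; exact Finset.mem_filter.mpr ⟨Finset.mem_Icc.mpr ⟨by omega, le_rfl⟩, hfp⟩
    · simp only [Finset.mem_filter, Finset.mem_Icc] at h ⊢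
      exact ⟨⟨h.1.1, by omega⟩, h.2⟩
  have hnm : p ∉ (Finset.Icc 1 q).filter fun r => f r = i := by
    simp only [Finset.mem_filter, Finset.mem_Icc]
    intro h; omega
  calc occCnt f i q + 1 = (insert p ((Finset.Icc 1 q).filter fun r => f r = i)).card := by
        rw [Finset.card_insert_of_notMem hnm]; rfl
    _ ≤ _ := Finset.card_le_card hsub

private lemma finStrictMono_growth {m : ℕ} {e : Fin m → ℕ} (he : StrictMono e) :
    ∀ (t : ℕ) (a b : Fin m), (b : ℕ) = (a : ℕ) + t → (b : ℕ) + e a ≤ (a : ℕ) + e b := by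
  intro t
  induction t with
  | zero => intro a b h; have : a = b := Fin.ext (by omega); subst this; omega
  | succ t ih =>
      intro a b h
      have hb : (a : ℕ) + t < m := by have := b.isLt; omega
      have h1 := ih a ⟨(a : ℕ) + t, hb⟩ rfl
      have h2 : e ⟨(a : ℕ) + t, hb⟩ < e b := he (by simp only [Fin.lt_def]; omega)
      simp only at h1
      omega

theorem stmt_19 (n k : ℕ) (d : ℕ → ℕ) (hk : 2 ≤ k)
    (hpos : ∀ i < n, 0 < d i) (hmono : ∀ i j, i ≤ j → j < n → d i ≤ d j) :
    (∃ f : ℕ → ℕ, VarKVFeasible n 2 (fun i _ => d i) f) ↔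
      (∃ f : ℕ → ℕ, VarKVFeasible n k (fun i j => if j ≤ 2 then d i else 3 * n) f) := by
  rcases Nat.eq_zero_or_pos n with hn | hn
  · subst hn
    constructor <;> intro _ <;> refine ⟨fun _ => 0, ?_, ?_, ?_⟩ <;>
      first
        | (intro p h1 h2; rw [Nat.zero_mul] at h2; omega)
        | (intro i hi; exact absurd hi (Nat.not_lt_zero i))
  constructor
  · rintro h
    obtain ⟨f, hf1, hf2, hf3⟩ := h
    have hnk : 2 * n ≤ n * k := by
      have := Nat.mul_le_mul_left n hk; omega
    obtain ⟨m, rfl⟩ : ∃ m, k = m + 2 := ⟨k - 2, by omega⟩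
    have hprod : n * (m + 2) = m * n + 2 * n := by ring
    set F : ℕ → ℕ := fun p => if p ≤ 2 * n then f p else (p - (2 * n + 1)) % n with hF
    have hFf : ∀ i : ℕ, ((Finset.Icc 1 (2 * n)).filter fun p => F p = i)
        = ((Finset.Icc 1 (n * 2)).filter fun p => f p = i) := by
      intro i
      rw [show n * 2 = 2 * n from by ring]
      apply Finset.filter_congr
      intro x hx
      simp only [Finset.mem_Icc] at hx
      simp only [hF, if_pos hx.2]
    have hEarly : ∀ i < n, ((Finset.Icc 1 (2 * n)).filter fun p => F p = i).card = 2 := by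
      intro i hi; rw [hFf]; exact hf2 i hi
    refine ⟨F, ?_, ?_, ?_⟩
    · intro p h1 h2
      by_cases hp : p ≤ 2 * n
      · simp only [hF, if_pos hp]
        exact hf1 p h1 (by omega)
      · simp only [hF, if_neg hp]
        exact Nat.mod_lt _ hn
    · intro i hi
      have hsplit : Finset.Icc 1 (n * (m + 2)) = Finset.Icc 1 (2 * n) ∪ Finset.Icc (2 * n + 1) (n * (m + 2)) := by
        ext x; simp only [Finset.mem_Icc, Finset.mem_union]; omega
      have hdisj : Disjoint ((Finset.Icc 1 (2 * n)).filter fun p => F p = i)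
          ((Finset.Icc (2 * n + 1) (n * (m + 2))).filter fun p => F p = i) := by
        rw [Finset.disjoint_left]
        intro a ha hb
        simp only [Finset.mem_filter, Finset.mem_Icc] at ha hb
        omega
      rw [hsplit, Finset.filter_union, Finset.card_union_of_disjoint hdisj, hEarly i hi]
      have hlate : ((Finset.Icc (2 * n + 1) (n * (m + 2))).filter fun p => F p = i).card = m := by
        have hcr : ((Finset.Icc (2 * n + 1) (n * (m + 2))).filter fun p => F p = i).card
            = (Finset.range m).card := by
          apply Finset.card_nbij' (fun p => (p - (2 * n + 1)) / n) (fun j => 2 * n + 1 + i + j * n)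
          · intro p hp
            simp only [Finset.mem_coe, Finset.mem_filter, Finset.mem_Icc] at hp
            obtain ⟨⟨hp1, hp2⟩, hpv⟩ := hp
            have hpv' : (p - (2 * n + 1)) % n = i := by
              simpa only [hF, if_neg (by omega : ¬ p ≤ 2 * n)] using hpv
            simp only [Finset.mem_coe, Finset.mem_range, Nat.add_sub_cancel]
            apply (Nat.div_lt_iff_lt_mul hn).mpr
            have hc : m * n = n * m := Nat.mul_comm _ _
            omega
          · intro j hj
            simp only [Finset.mem_coe, Finset.mem_range, Nat.add_sub_cancel] at hj
            simp only [Finset.mem_coe, Finset.mem_filter, Finset.mem_Icc]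
            have hjn : (j + 1) * n ≤ m * n := Nat.mul_le_mul_right n (by omega)
            have hj1 : (j + 1) * n = j * n + n := by ring
            refine ⟨⟨by omega, by omega⟩, ?_⟩
            simp only [hF, if_neg (by omega : ¬ 2 * n + 1 + i + j * n ≤ 2 * n)]
            have : 2 * n + 1 + i + j * n - (2 * n + 1) = i + j * n := by omega
            rw [this, Nat.add_mul_mod_self_right, Nat.mod_eq_of_lt hi]
          · intro p hp
            simp only [Finset.mem_coe, Finset.mem_filter, Finset.mem_Icc] at hp
            obtain ⟨⟨hp1, hp2⟩, hpv⟩ := hp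
            have hpv' : (p - (2 * n + 1)) % n = i := by
              simpa only [hF, if_neg (by omega : ¬ p ≤ 2 * n)] using hpv
            have hdm := Nat.div_add_mod (p - (2 * n + 1)) n
            have hc : (p - (2 * n + 1)) / n * n = n * ((p - (2 * n + 1)) / n) := Nat.mul_comm _ _
            beta_reduce
            omega
          · intro j hj
            simp only [Finset.mem_coe, Finset.mem_range, Nat.add_sub_cancel] at hj
            have : 2 * n + 1 + i + j * n - (2 * n + 1) = i + j * n := by omega
            beta_reduce
            rw [this, Nat.add_mul_div_right _ _ hn, Nat.div_eq_of_lt hi]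
            omega
        rw [hcr, Finset.card_range]
      rw [hlate]; omega
    · intro i hi p hp1 hp2 hFp
      by_cases hp : p ≤ 2 * n
      · have hfp : f p = i := by simpa only [hF, if_pos hp] using hFp
        have hcnt_eq : ((Finset.Icc 1 p).filter fun q => F q = i)
            = ((Finset.Icc 1 p).filter fun q => f q = i) := by
          apply Finset.filter_congr
          intro x hx
          simp only [Finset.mem_Icc] at hx
          simp only [hF, if_pos (by omega : x ≤ 2 * n)]
        obtain ⟨hA, hB⟩ := hf3 i hi p hp1 (by omega) hfp
        constructor
        · intro h1
          rw [hcnt_eq] at h1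
          have := hA h1
          simpa using this
        · intro q hq1 hq2 hFq hno
          have hfq : f q = i := by simpa only [hF, if_pos (by omega : q ≤ 2 * n)] using hFq
          have hno' : ∀ r, q < r → r < p → f r ≠ i := by
            intro r h1 h2 hfr
            exact hno r h1 h2 (by simpa only [hF, if_pos (by omega : r ≤ 2 * n)] using hfr)
          have hqd := hB q hq1 hq2 hfq hno'
          simp only at hqd
          have hle2 : ((Finset.Icc 1 p).filter fun q' => F q' = i).card ≤ 2 := by
            rw [hcnt_eq]
            calc ((Finset.Icc 1 p).filter fun q => f q = i).card
                ≤ ((Finset.Icc 1 (n * 2)).filter fun q => f q = i).card :=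
                  Finset.card_le_card (Finset.filter_subset_filter _
                    (Finset.Icc_subset_Icc_right (by omega)))
              _ = 2 := hf2 i hi
          simp only [if_pos hle2]
          exact hqd
      · have hi' : (p - (2 * n + 1)) % n = i := by
          simpa only [hF, if_neg hp] using hFp
        have hge3 : 3 ≤ ((Finset.Icc 1 p).filter fun q' => F q' = i).card := by
          have hsub : insert p ((Finset.Icc 1 (2 * n)).filter fun q => F q = i)
              ⊆ (Finset.Icc 1 p).filter fun q => F q = i := by
            intro r hr
            rcases Finset.mem_insert.mp hr with h | h
            · subst h; exact Finset.mem_filter.mpr ⟨Finset.mem_Icc.mpr ⟨by omega, le_rfl⟩, hFp⟩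
            · simp only [Finset.mem_filter, Finset.mem_Icc] at h ⊢
              exact ⟨⟨h.1.1, by omega⟩, h.2⟩
          have hnm : p ∉ (Finset.Icc 1 (2 * n)).filter fun q => F q = i := by
            simp only [Finset.mem_filter, Finset.mem_Icc]
            intro h; omega
          calc 3 = (insert p ((Finset.Icc 1 (2 * n)).filter fun q => F q = i)).card := by
                rw [Finset.card_insert_of_notMem hnm, hEarly i hi]
            _ ≤ _ := Finset.card_le_card hsub
        constructor
        · intro h1; omega
        · intro q hq1 hq2 hFq hno
          simp only [if_neg (by omega : ¬ ((Finset.Icc 1 p).filter fun q' => F q' = i).card ≤ 2)]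
          by_cases hs : p - (2 * n + 1) < n
          · omega
          · have hr : F (p - n) = i := by
              simp only [hF, if_neg (by omega : ¬ p - n ≤ 2 * n)]
              have h1 : p - n - (2 * n + 1) = p - (2 * n + 1) - n := by omega
              rw [h1]
              calc (p - (2 * n + 1) - n) % n = (p - (2 * n + 1) - n + n) % n :=
                    (Nat.add_mod_right _ n).symm
                _ = i := by rw [show p - (2 * n + 1) - n + n = p - (2 * n + 1) from by omega]; exact hi'
            have hqr : ¬ (q < p - n) := fun h => hno (p - n) h (by omega) hr
            omega

  · rintro h
    obtain ⟨f, hf1, hf2, hf3⟩ := h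
    have hnk : 2 * n ≤ n * k := by
      have := Nat.mul_le_mul_left n hk; omega
    set S : Finset ℕ := (Finset.Icc 1 (n * k)).filter (fun p => occCnt f (f p) p ≤ 2) with hS
    -- each task contributes exactly two elements to S
    have hSi : ∀ i < n, (S.filter fun p => f p = i).card = 2 := by
      intro i hi
      have hT : ((Finset.Icc 1 (n * k)).filter fun p => f p = i).card = k := hf2 i hi
      have hinj : Set.InjOn (occCnt f i) ((Finset.Icc 1 (n * k)).filter fun p => f p = i) := by
        intro a ha b hb hab
        simp only [Finset.coe_filter, Set.mem_setOf_eq, Finset.mem_Icc] at ha hb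
        by_contra hne
        rcases Nat.lt_or_ge a b with hlt | hge
        · have := occCnt_succ_le f i ha.1.1 hlt ha.2 hb.2; omega
        · have hlt : b < a := by omega
          have := occCnt_succ_le f i hb.1.1 hlt hb.2 ha.2; omega
      have himg : (((Finset.Icc 1 (n * k)).filter fun p => f p = i).image (occCnt f i))
          = Finset.Icc 1 k := by
        apply Finset.eq_of_subset_of_card_le
        · intro c hc
          simp only [Finset.mem_image, Finset.mem_filter, Finset.mem_Icc] at hc ⊢
          obtain ⟨p, ⟨⟨hp1, hp2⟩, hfp⟩, rfl⟩ := hc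
          refine ⟨occCnt_pos f i p hp1 hfp, ?_⟩
          calc occCnt f i p ≤ occCnt f i (n * k) := occCnt_mono f i hp2
            _ = k := hT
        · rw [Finset.card_image_of_injOn hinj, hT, Nat.card_Icc]
          omega
      have hset : S.filter (fun p => f p = i)
          = ((Finset.Icc 1 (n * k)).filter fun p => f p = i).filter (fun p => occCnt f i p ≤ 2) := by
        ext p
        simp only [hS, Finset.mem_filter, Finset.mem_Icc]
        constructor
        · rintro ⟨⟨hp, hc⟩, hfp⟩; exact ⟨⟨hp, hfp⟩, by rwa [hfp] at hc⟩
        · rintro ⟨⟨hp, hfp⟩, hc⟩; exact ⟨⟨hp, by rwa [hfp]⟩, hfp⟩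
      rw [hset]
      have hinj2 : Set.InjOn (occCnt f i)
          ((((Finset.Icc 1 (n * k)).filter fun p => f p = i).filter fun p => occCnt f i p ≤ 2)) :=
        hinj.mono (fun x hx => Finset.filter_subset _ _ hx)
      rw [← Finset.card_image_of_injOn hinj2]
      have himf : ((((Finset.Icc 1 (n * k)).filter fun p => f p = i).filter
            fun p => occCnt f i p ≤ 2).image (occCnt f i))
          = (Finset.Icc 1 k).filter (fun c => c ≤ 2) := by
        rw [← himg]
        exact (Finset.filter_image (f := occCnt f i)
          (s := (Finset.Icc 1 (n * k)).filter fun p => f p = i) (p := fun c => c ≤ 2)).symm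
      rw [himf]
      have : (Finset.Icc 1 k).filter (fun c => c ≤ 2) = Finset.Icc 1 2 := by
        ext c
        simp only [Finset.mem_filter, Finset.mem_Icc]
        omega
      rw [this, Nat.card_Icc]
    have hScard : S.card = 2 * n := by
      have hU : S = (Finset.range n).biUnion (fun i => S.filter fun p => f p = i) := by
        ext p
        simp only [Finset.mem_biUnion, Finset.mem_range]
        constructor
        · intro hp
          have hp' := hp
          simp only [hS, Finset.mem_filter, Finset.mem_Icc] at hp'
          exact ⟨f p, hf1 p hp'.1.1 hp'.1.2, Finset.mem_filter.mpr ⟨hp, rfl⟩⟩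
        · rintro ⟨i, _, hp⟩
          exact (Finset.mem_filter.mp hp).1
      rw [hU, Finset.card_biUnion]
      · rw [Finset.sum_congr rfl (fun i hi => hSi i (Finset.mem_range.mp hi)),
          Finset.sum_const, Finset.card_range, smul_eq_mul]
        ring
      · intro i _ j _ hij
        rw [Function.onFun, Finset.disjoint_left]
        intro a ha hb
        simp only [Finset.mem_filter] at ha hb
        exact hij (ha.2 ▸ hb.2 ▸ rfl)
    set E : ℕ → ℕ := fun t => if h : t < 2 * n then (S.orderEmbOfFin hScard ⟨t, h⟩ : ℕ) else 0
      with hE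
    have hEmem : ∀ t, t < 2 * n → E t ∈ S := by
      intro t h
      simp only [hE, dif_pos h]
      exact Finset.orderEmbOfFin_mem S hScard _
    have hErange : ∀ t, t < 2 * n → 1 ≤ E t ∧ E t ≤ n * k := by
      intro t h
      have := hEmem t h
      simp only [hS, Finset.mem_filter, Finset.mem_Icc] at this
      exact this.1
    have hEsm : ∀ a b, a < b → b < 2 * n → E a < E b := by
      intro a b hab hb
      simp only [hE, dif_pos hb, dif_pos (lt_trans hab hb)]
      exact (S.orderEmbOfFin hScard).strictMono (by simp only [Fin.mk_lt_mk]; exact hab)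
    have hEle : ∀ a b, a ≤ b → b < 2 * n → E a ≤ E b := by
      intro a b hab hb
      rcases Nat.eq_or_lt_of_le hab with rfl | h
      · exact le_rfl
      · exact le_of_lt (hEsm a b h hb)
    have hErefl : ∀ a b, a < 2 * n → b < 2 * n → E a ≤ E b → a ≤ b := by
      intro a b ha hb hle
      by_contra hcon
      have := hEsm b a (by omega) ha
      omega
    have hEinj : ∀ a b, a < 2 * n → b < 2 * n → E a = E b → a = b := by
      intro a b ha hb heq
      have h1 := hErefl a b ha hb (le_of_eq heq)
      have h2 := hErefl b a hb ha (le_of_eq heq.symm)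
      omega
    have hEsurj : ∀ s ∈ S, ∃ t, t < 2 * n ∧ E t = s := by
      intro s hs
      have hrng : s ∈ Set.range (S.orderEmbOfFin hScard) := by
        rw [Finset.range_orderEmbOfFin]
        exact hs
      obtain ⟨j, hj⟩ := hrng
      exact ⟨(j : ℕ), j.isLt, by simp only [hE, dif_pos j.isLt, Fin.eta]; exact hj⟩
    have hEgrow : ∀ a b, a ≤ b → b < 2 * n → b + E a ≤ a + E b := by
      intro a b hab hb
      have ha : a < 2 * n := by omega
      simp only [hE, dif_pos hb, dif_pos ha]
      exact finStrictMono_growth (S.orderEmbOfFin hScard).strictMono (b - a)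
        ⟨a, ha⟩ ⟨b, hb⟩ (by simp only; omega)
    set R : ℕ → ℕ := fun s => if h : s ∈ S then (hEsurj s h).choose + 1 else 0 with hR
    have hRspec : ∀ s, ∀ h : s ∈ S, R s - 1 < 2 * n ∧ E (R s - 1) = s ∧ 1 ≤ R s := by
      intro s h
      simp only [hR, dif_pos h, Nat.add_sub_cancel]
      obtain ⟨h1, h2⟩ := (hEsurj s h).choose_spec
      exact ⟨h1, h2, by omega⟩
    set f2 : ℕ → ℕ := fun q => f (E (q - 1)) with hf2d
    have hbij : ∀ t, 1 ≤ t → t ≤ 2 * n → ∀ i : ℕ,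
        ((Finset.Icc 1 t).filter fun q => f2 q = i).card
          = (S.filter fun s => f s = i ∧ s ≤ E (t - 1)).card := by
      intro t ht1 ht2 i
      apply Finset.card_nbij' (fun q => E (q - 1)) R
      · intro q hq
        simp only [Finset.mem_coe, Finset.mem_filter, Finset.mem_Icc] at hq ⊢
        obtain ⟨⟨hq1, hq2⟩, hfq⟩ := hq
        exact ⟨hEmem _ (by omega), hfq, hEle (q - 1) (t - 1) (by omega) (by omega)⟩
      · intro s hs
        simp only [Finset.mem_coe, Finset.mem_filter, Finset.mem_Icc] at hs ⊢
        obtain ⟨hsS, hfs, hsle⟩ := hs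
        obtain ⟨hlt, hEeq, hR1⟩ := hRspec s hsS
        have hle : R s - 1 ≤ t - 1 := hErefl (R s - 1) (t - 1) hlt (by omega) (by rw [hEeq]; exact hsle)
        refine ⟨⟨hR1, by omega⟩, ?_⟩
        simp only [hf2d, hEeq]
        exact hfs
      · intro q hq
        simp only [Finset.mem_coe, Finset.mem_filter, Finset.mem_Icc] at hq
        obtain ⟨⟨hq1, hq2⟩, _⟩ := hq
        have hqlt : q - 1 < 2 * n := by omega
        obtain ⟨hlt, hEeq, hR1⟩ := hRspec _ (hEmem _ hqlt)
        have := hEinj _ _ hlt hqlt hEeq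
        beta_reduce
        omega
      · intro s hs
        simp only [Finset.mem_coe, Finset.mem_filter] at hs
        exact (hRspec s hs.1).2.1
    refine ⟨f2, ?_, ?_, ?_⟩
    · intro p h1 h2
      have ht : p - 1 < 2 * n := by omega
      exact hf1 _ (hErange _ ht).1 (hErange _ ht).2
    · intro i hi
      have h2n : (Finset.Icc 1 (n * 2)) = Finset.Icc 1 (2 * n) := by rw [Nat.mul_comm]
      rw [h2n, hbij (2 * n) (by omega) le_rfl i]
      have : (S.filter fun s => f s = i ∧ s ≤ E (2 * n - 1)) = S.filter (fun s => f s = i) := by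
        apply Finset.filter_congr
        intro s hsS
        obtain ⟨t, ht, rfl⟩ := hEsurj s hsS
        have hle := hEle t (2 * n - 1) (by omega) (by omega)
        exact ⟨fun h => h.1, fun h => ⟨h, hle⟩⟩
      rw [this]
      exact hSi i hi
    · intro i hi p hp1 hp2 hfp
      have hplt : p - 1 < 2 * n := by omega
      have hPS : E (p - 1) ∈ S := hEmem _ hplt
      have hPmem : 1 ≤ E (p - 1) ∧ E (p - 1) ≤ n * k := hErange _ hplt
      have hfP : f (E (p - 1)) = i := hfp
      have hcntP : occCnt f i (E (p - 1)) ≤ 2 := by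
        have := (Finset.mem_filter.mp hPS).2
        rwa [hfP] at this
      have hclosed : ∀ Q, 1 ≤ Q → Q ≤ E (p - 1) → f Q = i → Q ∈ S := by
        intro Q h1 h2 hfQ
        refine Finset.mem_filter.mpr ⟨Finset.mem_Icc.mpr ⟨h1, le_trans h2 hPmem.2⟩, ?_⟩
        rw [hfQ]
        exact le_trans (occCnt_mono f i h2) hcntP
      have hset2 : (S.filter fun s => f s = i ∧ s ≤ E (p - 1))
          = (Finset.Icc 1 (E (p - 1))).filter (fun Q => f Q = i) := by
        ext Q
        simp only [Finset.mem_filter, Finset.mem_Icc]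
        constructor
        · rintro ⟨hQS, hfQ, hle⟩
          have h1 : 1 ≤ Q := (Finset.mem_Icc.mp (Finset.mem_filter.mp hQS).1).1
          exact ⟨⟨h1, hle⟩, hfQ⟩
        · rintro ⟨⟨h1, h2⟩, hfQ⟩
          exact ⟨hclosed Q h1 h2 hfQ, hfQ, h2⟩
      have hcnt_eq : ((Finset.Icc 1 p).filter fun q => f2 q = i).card = occCnt f i (E (p - 1)) := by
        rw [hbij p hp1 (by omega) i, hset2]
        rfl
      obtain ⟨hA, hB⟩ := hf3 i hi (E (p - 1)) hPmem.1 hPmem.2 hfP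
      constructor
      · intro h1
        rw [hcnt_eq] at h1
        have hPd := hA h1
        simp only [if_pos (by norm_num : (1:ℕ) ≤ 2)] at hPd
        have h0 : 1 ≤ E 0 := (hErange 0 (by omega)).1
        have hg := hEgrow 0 (p - 1) (by omega) hplt
        show p ≤ d i
        omega
      · intro q hq1 hq2 hfq hno
        have hqlt : q - 1 < 2 * n := by omega
        have hQS : E (q - 1) ∈ S := hEmem _ hqlt
        have hQmem : 1 ≤ E (q - 1) ∧ E (q - 1) ≤ n * k := hErange _ hqlt
        have hfQ : f (E (q - 1)) = i := hfq
        have hQP : E (q - 1) < E (p - 1) := hEsm (q - 1) (p - 1) (by omega) hplt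
        have hno' : ∀ r, E (q - 1) < r → r < E (p - 1) → f r ≠ i := by
          intro r hr1 hr2 hfr
          have hrS : r ∈ S := hclosed r (by omega) (le_of_lt hr2) hfr
          obtain ⟨t, htlt, hte⟩ := hEsurj r hrS
          have ht1 : q - 1 < t := by
            by_contra hcon
            have := hEle t (q - 1) (by omega) hqlt
            omega
          have ht2 : t < p - 1 := by
            by_contra hcon
            have := hEle (p - 1) t (by omega) htlt
            omega
          refine hno (t + 1) (by omega) (by omega) ?_
          show f (E (t + 1 - 1)) = i
          rw [Nat.add_sub_cancel, hte]
          exact hfr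
        have hPQ := hB (E (q - 1)) hQmem.1 hQP hfQ hno'
        simp only at hPQ
        have hcntP' : ((Finset.Icc 1 (E (p - 1))).filter fun q' => f q' = i).card ≤ 2 := hcntP
        rw [if_pos hcntP'] at hPQ
        have h2le : 2 ≤ occCnt f i (E (p - 1)) := by
          have ha := occCnt_pos f i (E (q - 1)) hQmem.1 hfQ
          have hb := occCnt_succ_le f i hQmem.1 hQP hfQ hfP
          omega
        have hg := hEgrow (q - 1) (p - 1) (by omega) hplt
        show p ≤ q + d i
        omega
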